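/- Let Γ₁, Γ₂ be parabolic subgroups of a Coxeter group W. Then Γ₁ ∩ Γ₂ is a parabolic subgroup of W. -/

import Mathlib

open List

namespace CoxeterSystem

variable {B W : Type*} [Group W] {M : CoxeterMatrix B} (cs : CoxeterSystem M W)

local prefix:100 "s" => cs.simple
local prefix:100 "π" => cs.wordProd
local prefix:100 "ℓ" => cs.length

noncomputable section
open Classical

/-- The permutation of `W × ZMod 2` associated to a simple reflection. -/
def refPerm (i : B) : Equiv.Perm (W × ZMod 2) :=
  Function.Involutive.toPerm
    (fun x => (s i * x.1 * s i, x.2 + if x.1 = s i then 1 else 0))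
    (by
      intro x
      have h : (s i * x.1 * s i = s i) ↔ (x.1 = s i) := by
        constructor
        · intro h
          have := congrArg (fun z => s i * z * s i) h
          simpa [mul_assoc, cs.simple_mul_simple_cancel_left] using this
        · intro h; rw [h]; exact cs.simple_mul_simple_cancel_right _
      ext
      · show s i * (s i * x.1 * s i) * s i = x.1
        simp [mul_assoc, cs.simple_mul_simple_cancel_left]
      · show x.2 + _ + _ = x.2
        simp only [h]
        by_cases hh : x.1 = s i <;>
          simp [hh, add_assoc, CharTwo.add_self_eq_zero])

theorem refPerm_apply (i : B) (t : W) (ε : ZMod 2) :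
    refPerm cs i (t, ε) = (s i * t * s i, ε + if t = s i then 1 else 0) := rfl

private theorem key_comm (i i' : B) :
    (s i * s i')⁻¹ * s i = s i * (s i * s i') := by
  rw [mul_inv_rev, cs.inv_simple, cs.inv_simple, mul_assoc, cs.simple_mul_simple_cancel_left,
    ← mul_assoc]
  exact cs.simple_mul_simple_cancel_right _

theorem refPerm_mul_pow_apply (i i' : B) (k : ℕ) (t : W) (ε : ZMod 2) :
    ((refPerm cs i * refPerm cs i') ^ k) (t, ε) =
      ((s i * s i') ^ k * t * ((s i * s i') ^ k)⁻¹,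
        ε + ∑ l ∈ Finset.range k,
          ((if t = s i * (s i * s i') ^ (2 * l + 1) then (1 : ZMod 2) else 0) +
            (if t = s i * (s i * s i') ^ (2 * l + 2) then (1 : ZMod 2) else 0))) := by
  set a := s i with ha
  set p := s i * s i' with hp
  have hpa : p⁻¹ * a = a * p := key_comm cs i i'
  induction k generalizing t ε with
  | zero => simp
  | succ k ih =>
    rw [pow_succ, Equiv.Perm.mul_apply]
    have hs' : s i' = a * p := by
      show cs.simple i' = cs.simple i * (cs.simple i * cs.simple i')
      rw [cs.simple_mul_simple_cancel_left]
    have hc : s i' * s i * s i' = a * p ^ 2 := by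
      show cs.simple i' * cs.simple i * cs.simple i' =
        cs.simple i * (cs.simple i * cs.simple i') ^ 2
      simp [pow_two, mul_assoc, cs.simple_mul_simple_cancel_left]
    have step : (refPerm cs i * refPerm cs i') (t, ε) =
        (p * t * p⁻¹,
          ε + ((if t = a * p ^ (2 * 0 + 1) then (1 : ZMod 2) else 0) +
            (if t = a * p ^ (2 * 0 + 2) then (1 : ZMod 2) else 0))) := by
      rw [Equiv.Perm.mul_apply, refPerm_apply, refPerm_apply]
      have e1 : (t = s i') ↔ (t = a * p ^ (2 * 0 + 1)) := by rw [pow_one, hs']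
      have e2 : (s i' * t * s i' = s i) ↔ (t = a * p ^ (2 * 0 + 2)) := by
        constructor
        · intro h
          have ht : t = s i' * s i * s i' := by
            have := congrArg (fun z => s i' * z * s i') h
            simpa [mul_assoc, cs.simple_mul_simple_cancel_left] using this
          rw [ht]
          simpa using hc
        · intro h
          have ht : t = s i' * s i * s i' := by rw [h]; simpa using hc.symm
          rw [ht]
          simp [mul_assoc, cs.simple_mul_simple_cancel_left]
      ext
      · show s i * (s i' * t * s i') * s i = p * t * p⁻¹
        rw [hp, mul_inv_rev, cs.inv_simple, cs.inv_simple]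
        group
      · show ε + _ + _ = ε + _
        rw [← e1, ← e2, add_assoc]
    rw [step, ih]
    have conj_eq : ∀ r : ℕ,
        (p * t * p⁻¹ = a * p ^ r) ↔ (t = a * p ^ (r + 2)) := by
      intro r
      have lhs_eq : p⁻¹ * (a * p ^ r) * p = a * p ^ (r + 2) := by
        calc p⁻¹ * (a * p ^ r) * p = (p⁻¹ * a) * (p ^ r * p) := by group
          _ = (a * p) * (p ^ r * p) := by rw [hpa]
          _ = a * p ^ (r + 2) := by rw [pow_succ, pow_add, pow_one]; group
      constructor
      · intro h
        have : t = p⁻¹ * (a * p ^ r) * p := by rw [← h]; group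
        rw [this, lhs_eq]
      · intro h
        rw [h, ← lhs_eq]; group
    have sum_eq : ∑ l ∈ Finset.range k,
          ((if p * t * p⁻¹ = a * p ^ (2 * l + 1) then (1 : ZMod 2) else 0) +
            (if p * t * p⁻¹ = a * p ^ (2 * l + 2) then (1 : ZMod 2) else 0)) =
        ∑ l ∈ Finset.range k,
          ((if t = a * p ^ (2 * (l + 1) + 1) then (1 : ZMod 2) else 0) +
            (if t = a * p ^ (2 * (l + 1) + 2) then (1 : ZMod 2) else 0)) := by
      apply Finset.sum_congr rfl
      intro l _
      rw [conj_eq (2 * l + 1), conj_eq (2 * l + 2)]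
      have h1 : 2 * l + 1 + 2 = 2 * (l + 1) + 1 := by ring
      have h2 : 2 * l + 2 + 2 = 2 * (l + 1) + 2 := by ring
      rw [h1, h2]
    rw [sum_eq]
    ext
    · show p ^ k * (p * t * p⁻¹) * (p ^ k)⁻¹ = p ^ (k + 1) * t * (p ^ (k + 1))⁻¹
      rw [pow_succ]; group
    · show ε + _ + _ = ε + _
      rw [add_assoc, Finset.sum_range_succ' (fun l =>
        ((if t = a * p ^ (2 * l + 1) then (1 : ZMod 2) else 0) +
          (if t = a * p ^ (2 * l + 2) then (1 : ZMod 2) else 0))) k]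
      ring_nf

private theorem sum_two_blocks (F : ℕ → ZMod 2) (k : ℕ) :
    ∑ l ∈ Finset.range k, (F (2 * l + 1) + F (2 * l + 2)) =
      ∑ j ∈ Finset.range (2 * k), F (j + 1) := by
  induction k with
  | zero => simp
  | succ k ih =>
    rw [Finset.sum_range_succ, ih]
    have h2 : 2 * (k + 1) = (2 * k + 1) + 1 := by ring
    rw [h2, Finset.sum_range_succ, Finset.sum_range_succ]
    have h3 : 2 * k + 1 + 1 = 2 * k + 2 := by ring
    rw [h3, add_assoc]

theorem refPerm_liftable : M.IsLiftable (fun i => refPerm cs i) := by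
  intro i i'
  set m := M i i' with hm
  apply Equiv.ext
  rintro ⟨t, ε⟩
  rw [show ((fun i => refPerm cs i) i * (fun i => refPerm cs i) i') ^ m
      = (refPerm cs i * refPerm cs i') ^ m from rfl]
  rw [refPerm_mul_pow_apply]
  have hpm : (s i * s i') ^ m = 1 := by rw [hm]; exact cs.simple_mul_simple_pow i i'
  have hsum : ∑ l ∈ Finset.range m,
      ((if t = s i * (s i * s i') ^ (2 * l + 1) then (1 : ZMod 2) else 0) +
        (if t = s i * (s i * s i') ^ (2 * l + 2) then (1 : ZMod 2) else 0)) = 0 := by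
    set F : ℕ → ZMod 2 := fun r => if t = s i * (s i * s i') ^ r then 1 else 0 with hF
    rw [show (∑ l ∈ Finset.range m,
        ((if t = s i * (s i * s i') ^ (2 * l + 1) then (1 : ZMod 2) else 0) +
          (if t = s i * (s i * s i') ^ (2 * l + 2) then (1 : ZMod 2) else 0)))
        = ∑ l ∈ Finset.range m, (F (2 * l + 1) + F (2 * l + 2)) from rfl]
    rw [sum_two_blocks, two_mul, Finset.sum_range_add]
    have hper : ∀ j : ℕ, F (m + j) = F j := by
      intro j
      have hp2 : (s i * s i') ^ (m + j) = (s i * s i') ^ j := by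
        rw [pow_add, hpm, one_mul]
      simp only [hF, hp2]
    have hcongr : ∑ j ∈ Finset.range m, F (m + j + 1) = ∑ j ∈ Finset.range m, F (j + 1) :=
      Finset.sum_congr rfl (fun j _ => by
        rw [show m + j + 1 = m + (j + 1) by ring, hper (j + 1)])
    rw [hcongr]
    exact CharTwo.add_self_eq_zero _
  rw [hsum, hpm]
  simp

/-- The parity representation `W →* Perm (W × ZMod 2)`. -/
def invPerm : W →* Equiv.Perm (W × ZMod 2) :=
  cs.lift ⟨fun i => refPerm cs i, refPerm_liftable cs⟩

theorem invPerm_simple (i : B) : invPerm cs (s i) = refPerm cs i :=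
  cs.lift_apply_simple _ _

private theorem conj_eq_iff' (g a t : W) : g⁻¹ * a * g = t ↔ a = g * t * g⁻¹ := by
  constructor
  · intro h; rw [← h]; group
  · intro h; rw [h]; group

theorem invPerm_wordProd (ω : List B) (t : W) (ε : ZMod 2) :
    invPerm cs (π ω) (t, ε) =
      (π ω * t * (π ω)⁻¹, ε + ((cs.rightInvSeq ω).count t : ZMod 2)) := by
  induction ω generalizing ε with
  | nil => simp [rightInvSeq]
  | cons i ω ih =>
    rw [wordProd_cons, map_mul, Equiv.Perm.mul_apply, ih, invPerm_simple, refPerm_apply]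
    have hcond : (π ω * t * (π ω)⁻¹ = s i) ↔ ((π ω)⁻¹ * s i * π ω = t) := by
      rw [conj_eq_iff' (π ω) (s i) t]
      constructor
      · intro h; rw [← h]
      · intro h; rw [h]
    have hcount : ((cs.rightInvSeq (i :: ω)).count t : ZMod 2) =
        ((cs.rightInvSeq ω).count t : ZMod 2) +
          (if π ω * t * (π ω)⁻¹ = s i then 1 else 0) := by
      rw [show cs.rightInvSeq (i :: ω)
          = ((π ω)⁻¹ * s i * π ω) :: cs.rightInvSeq ω from rfl, List.count_cons]
      push_cast
      congr 1
      simp only [beq_iff_eq]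
      by_cases h : (π ω)⁻¹ * s i * π ω = t
      · rw [if_pos h, if_pos (hcond.mpr h)]
      · rw [if_neg h, if_neg (fun hh => h (hcond.mp hh))]
    rw [hcount]
    ext
    · show s i * (π ω * t * (π ω)⁻¹) * s i = (s i * π ω) * t * (s i * π ω)⁻¹
      rw [mul_inv_rev, cs.inv_simple]; group
    · show ε + _ + _ = ε + _
      rw [add_assoc]

theorem count_ris_parity {ω ω' : List B} (h : π ω = π ω') (t : W) :
    ((cs.rightInvSeq ω).count t : ZMod 2) = ((cs.rightInvSeq ω').count t : ZMod 2) := by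
  have h1 := invPerm_wordProd cs ω t 0
  have h2 := invPerm_wordProd cs ω' t 0
  rw [h] at h1
  rw [h1] at h2
  have := (Prod.mk.injEq _ _ _ _).mp h2
  simpa using this.2

theorem count_ris_append (ω₁ ω₂ : List B) (t : W) :
    (cs.rightInvSeq (ω₁ ++ ω₂)).count t =
      (cs.rightInvSeq ω₁).count (π ω₂ * t * (π ω₂)⁻¹) + (cs.rightInvSeq ω₂).count t := by
  induction ω₁ with
  | nil => simp [rightInvSeq]
  | cons i ω₁ ih =>
    rw [show cs.rightInvSeq ((i :: ω₁) ++ ω₂)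
        = ((π (ω₁ ++ ω₂))⁻¹ * s i * π (ω₁ ++ ω₂)) :: cs.rightInvSeq (ω₁ ++ ω₂) from rfl,
      List.count_cons, ih,
      show cs.rightInvSeq (i :: ω₁)
        = ((π ω₁)⁻¹ * s i * π ω₁) :: cs.rightInvSeq ω₁ from rfl,
      List.count_cons]
    have hcond : ((π (ω₁ ++ ω₂))⁻¹ * s i * π (ω₁ ++ ω₂) = t) ↔
        ((π ω₁)⁻¹ * s i * π ω₁ = π ω₂ * t * (π ω₂)⁻¹) := by
      rw [wordProd_append, conj_eq_iff', conj_eq_iff']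
      constructor
      · intro h; rw [h]; group
      · intro h; rw [h]; group
    simp only [beq_iff_eq]
    by_cases h : (π (ω₁ ++ ω₂))⁻¹ * s i * π (ω₁ ++ ω₂) = t
    · rw [if_pos h, if_pos (hcond.mp h)]
      omega
    · rw [if_neg h, if_neg (fun hh => h (hcond.mpr hh))]
      omega

theorem count_ris_palindrome (ρ : List B) (i : B) :
    (((cs.rightInvSeq (ρ ++ i :: ρ.reverse)).count (π ρ * s i * (π ρ)⁻¹) : ℕ) : ZMod 2) = 1 := by
  induction ρ with
  | nil => simp [rightInvSeq]
  | cons j ρ ih =>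
    set t' := π ρ * s i * (π ρ)⁻¹ with ht'def
    have ht'inv : t'⁻¹ = t' := by
      rw [ht'def]
      simp [mul_inv_rev, cs.inv_simple, mul_assoc]
    set κ := ρ ++ i :: ρ.reverse with hκ
    have hπκ : π κ = t' := by
      rw [hκ, ht'def, wordProd_append, wordProd_cons, wordProd_reverse]
      group
    have hlist : (j :: ρ) ++ i :: (j :: ρ).reverse = j :: κ.concat j := by
      rw [hκ, List.concat_eq_append, List.reverse_cons]
      simp
    have htarget : π (j :: ρ) * s i * (π (j :: ρ))⁻¹ = s j * t' * s j := by
      rw [wordProd_cons, ht'def, mul_inv_rev, cs.inv_simple]; group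
    rw [hlist, htarget]
    have hπκj : π (κ.concat j) = t' * s j := by
      rw [List.concat_eq_append, wordProd_append, hπκ]; simp
    have hhead : ((π (κ.concat j))⁻¹ * s j * π (κ.concat j) = s j * t' * s j) ↔ (t' = s j) := by
      rw [hπκj]
      constructor
      · intro h
        have hL : (t' * s j)⁻¹ * s j * (t' * s j) = (s j * t' * s j) * (t' * s j) := by
          rw [mul_inv_rev, cs.inv_simple, ht'inv]
        rw [hL] at h
        have h2 : t' * s j = 1 := by
          have h3 : (s j * t' * s j) * (t' * s j) = (s j * t' * s j) * 1 := by
            rw [mul_one]; exact h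
          exact mul_left_cancel h3
        have h4 : t' = (s j)⁻¹ := eq_inv_of_mul_eq_one_left (by rw [← h2])
        rw [h4, cs.inv_simple]
      · intro h
        rw [h]
        simp [mul_assoc, cs.simple_mul_simple_cancel_left, cs.simple_mul_simple_self]
    have htail : (s j = s j * t' * s j) ↔ (t' = s j) := by
      constructor
      · intro h
        have h2 : t' * s j = 1 := by
          have h3 : s j * (t' * s j) = s j * 1 := by
            rw [mul_one]
            conv_lhs => rw [← mul_assoc]
            exact h.symm
          exact mul_left_cancel h3
        have h4 : t' = (s j)⁻¹ := eq_inv_of_mul_eq_one_left (by rw [← h2])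
        rw [h4, cs.inv_simple]
      · intro h
        rw [h]
        simp [mul_assoc, cs.simple_mul_simple_cancel_left, cs.simple_mul_simple_self]
    have hmap : (List.map (⇑(MulAut.conj (s j))) (cs.rightInvSeq κ)).count (s j * t' * s j) =
        (cs.rightInvSeq κ).count t' := by
      have heq : s j * t' * s j = (MulAut.conj (s j)) t' := by
        simp [MulAut.conj_apply, cs.inv_simple]
      rw [heq]
      exact List.count_map_of_injective _ _ (MulAut.conj (s j)).injective _
    have hconcat : (cs.rightInvSeq (κ.concat j)).count (s j * t' * s j) =
        (cs.rightInvSeq κ).count t' + (if t' = s j then 1 else 0) := by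
      rw [cs.rightInvSeq_concat, List.concat_eq_append, List.count_append, hmap]
      congr 1
      by_cases h : t' = s j
      · rw [if_pos h]
        have hh : cs.simple j * t' * cs.simple j = cs.simple j := (htail.mpr h).symm
        rw [hh]
        simp
      · rw [if_neg h, List.count_eq_zero]
        simp only [List.mem_singleton]
        exact fun hh => h (htail.mp hh.symm)
    have hfinal : (cs.rightInvSeq (j :: κ.concat j)).count (s j * t' * s j)
        = (cs.rightInvSeq κ).count t' + ((if t' = s j then 1 else 0)
          + (if t' = s j then 1 else 0)) := by
      rw [show cs.rightInvSeq (j :: κ.concat j)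
          = ((π (κ.concat j))⁻¹ * s j * π (κ.concat j)) :: cs.rightInvSeq (κ.concat j) from rfl,
        List.count_cons, hconcat]
      simp only [beq_iff_eq]
      by_cases h : t' = s j
      · rw [if_pos h, if_pos (hhead.mpr h)]
      · rw [if_neg h, if_neg (fun hh => h (hhead.mp hh))]
    rw [hfinal]
    push_cast
    rw [ih]
    by_cases h : t' = s j
    · rw [if_pos h]
      decide
    · rw [if_neg h]
      simp

theorem strong_exchange_right {ω : List B} (hω : cs.IsReduced ω) {t : W}
    (ht : cs.IsReflection t) (hlt : ℓ (π ω * t) < ℓ (π ω)) :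
    ∃ j, ∃ hj : j < ω.length, π ω * t = π (ω.eraseIdx j) := by
  have htt : t * t = 1 := ht.mul_self
  -- first show t ∈ ris ω
  have hmem : t ∈ cs.rightInvSeq ω := by
    by_contra hmem
    have hcount0 : ((cs.rightInvSeq ω).count t : ZMod 2) = 0 := by
      rw [List.count_eq_zero.mpr hmem]; rfl
    obtain ⟨v, i, rfl⟩ := ht
    obtain ⟨ρ, rfl⟩ := cs.wordProd_surjective v
    set t := π ρ * s i * (π ρ)⁻¹ with htdef
    obtain ⟨ω'', hred'', heq''⟩ := cs.exists_reduced_word' (π ω * t)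
    have hπτ : π (ρ ++ i :: ρ.reverse) = t := by
      rw [wordProd_append, wordProd_cons, wordProd_reverse, htdef]
      group
    have hfullprod : π (ω'' ++ (ρ ++ i :: ρ.reverse)) = π ω := by
      rw [wordProd_append, hπτ, ← heq'', mul_assoc, htt, mul_one]
    have hparity := cs.count_ris_parity hfullprod t
    rw [cs.count_ris_append] at hparity
    rw [hπτ] at hparity
    have hconj : t * t * t⁻¹ = t := mul_inv_cancel_right t t
    rw [hconj] at hparity
    push_cast at hparity
    rw [cs.count_ris_palindrome ρ i] at hparity
    rw [hcount0] at hparity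
    -- hparity : count t (ris ω'') + 1 = 0 in ZMod 2, so count is odd, so t ∈ ris ω''
    have hmem'' : t ∈ cs.rightInvSeq ω'' := by
      by_contra hh
      rw [List.count_eq_zero.mpr hh] at hparity
      simp at hparity
    have hinv := cs.isRightInversion_of_mem_rightInvSeq hred'' hmem''
    rw [← heq''] at hinv
    have := hinv.2
    rw [mul_assoc, htt, mul_one] at this
    omega
  obtain ⟨j, hj, hget⟩ := List.mem_iff_getElem.mp hmem
  have hjlen : j < ω.length := by
    have := cs.length_rightInvSeq ω
    omega
  refine ⟨j, hjlen, ?_⟩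
  have := cs.wordProd_mul_getD_rightInvSeq ω j
  rw [List.getD_eq_getElem _ _ hj, hget] at this
  exact this

theorem strong_exchange_left {ω : List B} (hω : cs.IsReduced ω) {t : W}
    (ht : cs.IsReflection t) (hlt : ℓ (t * π ω) < ℓ (π ω)) :
    ∃ ω', ω'.Sublist ω ∧ ω'.length + 1 = ω.length ∧ t * π ω = π ω' := by
  have hred : cs.IsReduced ω.reverse := (cs.isReduced_reverse_iff ω).mpr hω
  have hlt' : ℓ (π ω.reverse * t) < ℓ (π ω.reverse) := by
    rw [wordProd_reverse]
    have h1 : (π ω)⁻¹ * t = (t⁻¹ * π ω)⁻¹ := by group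
    rw [h1, cs.length_inv, ht.inv, cs.length_inv]
    exact hlt
  obtain ⟨j, hj, heq⟩ := cs.strong_exchange_right hred ht hlt'
  refine ⟨(ω.reverse.eraseIdx j).reverse, ?_, ?_, ?_⟩
  · have h1 : (ω.reverse.eraseIdx j).Sublist ω.reverse := List.eraseIdx_sublist _ _
    have h2 := h1.reverse
    rwa [List.reverse_reverse] at h2
  · have hj' : j < ω.reverse.length := by simpa using hj
    have h1 := List.length_eraseIdx_add_one hj'
    simpa using h1
  · rw [wordProd_reverse]
    rw [wordProd_reverse] at heq
    have : t * π ω = ((π ω)⁻¹ * t⁻¹)⁻¹ := by group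
    rw [this, ht.inv, heq]

/-- Any word has a reduced subword with the same product. -/
theorem exists_reduced_sublist (ω : List B) :
    ∃ ω', ω'.Sublist ω ∧ cs.IsReduced ω' ∧ π ω' = π ω := by
  induction ω with
  | nil => exact ⟨[], List.Sublist.refl _, by simp [IsReduced], rfl⟩
  | cons i ω ih =>
    obtain ⟨ω', hsub, hred, hprod⟩ := ih
    rcases cs.length_simple_mul (π ω') i with h | h
    · -- s i * π ω' has length one more: i :: ω' is reduced
      refine ⟨i :: ω', hsub.cons_cons i, ?_, by rw [wordProd_cons, wordProd_cons, hprod]⟩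
      unfold IsReduced
      rw [wordProd_cons, h, hred]
      simp
    · -- descent: delete a letter
      have hlt : ℓ (s i * π ω') < ℓ (π ω') := by omega
      obtain ⟨ω'', hsub'', hlen'', heq''⟩ :=
        cs.strong_exchange_left hred (cs.isReflection_simple i) hlt
      refine ⟨ω'', hsub''.trans (hsub.trans (List.sublist_cons_self i ω)), ?_, ?_⟩
      · unfold IsReduced
        rw [← heq'']
        have hr : ℓ (π ω') = ω'.length := hred
        omega
      · rw [← heq'', wordProd_cons, hprod]

theorem mem_closure_simple_iff {T : Set B} {u : W} :
    u ∈ Subgroup.closure (cs.simple '' T) ↔ ∃ ω : List B, (∀ i ∈ ω, i ∈ T) ∧ u = π ω := by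
  constructor
  · intro h
    induction h using Subgroup.closure_induction with
    | mem x hx =>
      obtain ⟨i, hi, rfl⟩ := hx
      exact ⟨[i], by simpa using hi, by simp⟩
    | one => exact ⟨[], by simp, by simp⟩
    | mul x y hx hy ihx ihy =>
      obtain ⟨ωx, hxT, rfl⟩ := ihx
      obtain ⟨ωy, hyT, rfl⟩ := ihy
      refine ⟨ωx ++ ωy, ?_, by rw [wordProd_append]⟩
      intro i hi
      rcases List.mem_append.mp hi with h | h
      · exact hxT i h
      · exact hyT i h
    | inv x hx ihx =>
      obtain ⟨ωx, hxT, rfl⟩ := ihx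
      refine ⟨ωx.reverse, ?_, by rw [wordProd_reverse]⟩
      intro i hi
      exact hxT i (List.mem_reverse.mp hi)
  · rintro ⟨ω, hsub, rfl⟩
    induction ω with
    | nil => simpa using Subgroup.one_mem _
    | cons i ω ih =>
      rw [wordProd_cons]
      refine Subgroup.mul_mem _ ?_ (ih (fun j hj => hsub j (List.mem_cons_of_mem i hj)))
      exact Subgroup.subset_closure ⟨i, hsub i (List.mem_cons_self (a := i) (l := ω)), rfl⟩

theorem exists_reduced_word_subset {T : Set B} {u : W}
    (h : u ∈ Subgroup.closure (cs.simple '' T)) :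
    ∃ ω : List B, cs.IsReduced ω ∧ (∀ i ∈ ω, i ∈ T) ∧ u = π ω := by
  obtain ⟨ω, hsub, rfl⟩ := (cs.mem_closure_simple_iff).mp h
  obtain ⟨ω', hsl, hred, hprod⟩ := cs.exists_reduced_sublist ω
  exact ⟨ω', hred, fun i hi => hsub i (hsl.subset hi), hprod.symm⟩

theorem exists_left_descent_subset {T : Set B} {u : W}
    (h : u ∈ Subgroup.closure (cs.simple '' T)) (hu : u ≠ 1) :
    ∃ i ∈ T, ℓ (s i * u) < ℓ u ∧ s i * u ∈ Subgroup.closure (cs.simple '' T) := by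
  obtain ⟨ω, hred, hsub, rfl⟩ := cs.exists_reduced_word_subset h
  match ω, hred, hsub with
  | [], _, _ => exact absurd rfl hu
  | i :: ω₀, hred, hsub =>
    refine ⟨i, hsub i (List.mem_cons_self (a := i) (l := ω₀)), ?_, ?_⟩
    · rw [wordProd_cons, ← mul_assoc, cs.simple_mul_simple_self, one_mul]
      have h1 : ℓ (π ω₀) ≤ ω₀.length := cs.length_wordProd_le ω₀
      have h2 : ℓ (s i * π ω₀) = ω₀.length + 1 := by
        have h3 : ℓ (π (i :: ω₀)) = (i :: ω₀).length := hred
        rw [wordProd_cons] at h3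
        simpa using h3
      omega
    · rw [wordProd_cons, ← mul_assoc, cs.simple_mul_simple_self, one_mul]
      exact (cs.mem_closure_simple_iff).mpr
        ⟨ω₀, fun j hj => hsub j (List.mem_cons_of_mem i hj), rfl⟩

theorem length_mul_add_of_min_right {T' : Set B} {d : W}
    (hmin : ∀ b ∈ Subgroup.closure (cs.simple '' T'), ℓ d ≤ ℓ (d * b)) :
    ∀ b ∈ Subgroup.closure (cs.simple '' T'), ℓ (d * b) = ℓ d + ℓ b := by
  suffices h : ∀ n : ℕ, ∀ b ∈ Subgroup.closure (cs.simple '' T'), ℓ b = n →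
      ℓ (d * b) = ℓ d + ℓ b by
    intro b hb
    exact h (ℓ b) b hb rfl
  intro n
  induction n using Nat.strong_induction_on with
  | _ n ihn =>
    intro b hb hlb
    rcases eq_or_ne b 1 with rfl | hb1
    · simp
    · obtain ⟨β, hβred, hβsub, hbeq⟩ := cs.exists_reduced_word_subset hb
      have hβne : β ≠ [] := by
        intro hh
        rw [hh] at hbeq
        exact hb1 (by simpa using hbeq)
      set j := β.getLast hβne with hj
      set β₀ := β.dropLast with hβ₀
      have hsplit : β₀ ++ [j] = β := List.dropLast_append_getLast hβne
      have hβ₀red : cs.IsReduced β₀ := by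
        rw [hβ₀, List.dropLast_eq_take]
        exact hβred.take _
      set b'' := π β₀ with hb''
      have hb''mem : b'' ∈ Subgroup.closure (cs.simple '' T') :=
        (cs.mem_closure_simple_iff).mpr ⟨β₀, fun x hx => hβsub x
          ((List.dropLast_sublist β).subset hx), rfl⟩
      have hlenβ : β.length = ℓ b := by rw [hbeq]; exact hβred.symm
      have hlenβ₀ : β₀.length = β.length - 1 := by
        rw [hβ₀, List.dropLast_eq_take, List.length_take]
        omega
      have hβpos : 1 ≤ β.length := by
        cases β
        · exact absurd rfl hβne
        · simp
      have hlb'' : ℓ b'' = ℓ b - 1 := by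
        rw [hb'']
        have := hβ₀red
        unfold IsReduced at this
        omega
      have hbsplit : b = b'' * s j := by
        rw [hbeq, ← hsplit, wordProd_append, hb'']
        simp
      have hIH : ℓ (d * b'') = ℓ d + ℓ b'' := by
        apply ihn (ℓ b'') (by omega) b'' hb''mem rfl
      -- now show ℓ (d * b'' * s j) = ℓ (d * b'') + 1
      obtain ⟨δ, hδred, hδeq⟩ := cs.exists_reduced_word' d
      have hδlen : δ.length = ℓ d := by rw [hδeq]; exact hδred.symm
      have hcomboprod : π (δ ++ β₀) = d * b'' := by
        rw [wordProd_append, ← hδeq, hb'']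
      have hcombored : cs.IsReduced (δ ++ β₀) := by
        unfold IsReduced
        rw [hcomboprod, List.length_append, hIH]
        omega
      rcases cs.length_mul_simple (d * b'') j with hcase | hcase
      · -- ascent case : conclude
        have hbpos : ℓ b ≠ 0 := fun hh => hb1 (cs.length_eq_zero_iff.mp hh)
        have h5 : ℓ (d * b) = ℓ (d * b'') + 1 := by rw [hbsplit, ← mul_assoc, hcase]
        omega
      · -- descent case : contradiction via exchange
        exfalso
        have hlt : ℓ (π (δ ++ β₀) * s j) < ℓ (π (δ ++ β₀)) := by
          rw [hcomboprod]
          omega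
        obtain ⟨k, hk, hkeq⟩ := cs.strong_exchange_right hcombored
          (cs.isReflection_simple j) hlt
        rw [hcomboprod] at hkeq
        rcases lt_or_ge k δ.length with hkδ | hkδ
        · -- deletion in δ : contradicts minimality of d
          rw [List.eraseIdx_append_of_lt_length hkδ] at hkeq
          rw [wordProd_append] at hkeq
          have hb₁mem : b'' * s j * b''⁻¹ ∈ Subgroup.closure (cs.simple '' T') := by
            refine Subgroup.mul_mem _ (Subgroup.mul_mem _ hb''mem ?_) (Subgroup.inv_mem _ hb''mem)
            exact Subgroup.subset_closure ⟨j, hβsub j (by rw [← hsplit]; simp), rfl⟩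
          have hrw : d * (b'' * s j * b''⁻¹) = π (δ.eraseIdx k) := by
            have hk2 : d * b'' * s j = π (δ.eraseIdx k) * b'' := by rw [hkeq, hb'']
            calc d * (b'' * s j * b''⁻¹) = (d * b'' * s j) * b''⁻¹ := by group
              _ = (π (δ.eraseIdx k) * b'') * b''⁻¹ := by rw [hk2]
              _ = π (δ.eraseIdx k) := by group
          have hle : ℓ (d * (b'' * s j * b''⁻¹)) ≤ δ.length - 1 := by
            rw [hrw]
            have h1 := cs.length_wordProd_le (δ.eraseIdx k)
            have h2 := List.length_eraseIdx_add_one hkδ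
            omega
          have hge := hmin _ hb₁mem
          omega
        · -- deletion in β₀ : contradicts reducedness of β
          rw [List.eraseIdx_append_of_length_le hkδ] at hkeq
          rw [wordProd_append, ← hδeq] at hkeq
          have hbrw : b = π (β₀.eraseIdx (k - δ.length)) := by
            have hk2 : d * (b'' * s j) = d * π (β₀.eraseIdx (k - δ.length)) := by
              rw [← mul_assoc, hkeq]
            have hk3 := mul_left_cancel hk2
            rw [hbsplit, hk3]
          have h1 := cs.length_wordProd_le (β₀.eraseIdx (k - δ.length))
          have h2 : (β₀.eraseIdx (k - δ.length)).length ≤ β₀.length :=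
            (List.eraseIdx_sublist _ _).length_le
          have h3 : ℓ b ≤ (β₀.eraseIdx (k - δ.length)).length := by
            rw [hbrw]; exact h1
          -- need strict : eraseIdx removed an element
          have hklen : k - δ.length < β₀.length := by
            rw [List.length_append] at hk
            omega
          have h4 := List.length_eraseIdx_add_one hklen
          omega

theorem length_mul_add_of_min_left {T : Set B} {d : W}
    (hmin : ∀ a ∈ Subgroup.closure (cs.simple '' T), ℓ d ≤ ℓ (a * d)) :
    ∀ a ∈ Subgroup.closure (cs.simple '' T), ℓ (a * d) = ℓ a + ℓ d := by
  intro a ha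
  have hmin' : ∀ b ∈ Subgroup.closure (cs.simple '' T), ℓ d⁻¹ ≤ ℓ (d⁻¹ * b) := by
    intro b hb
    have h1 : (d⁻¹ * b)⁻¹ = b⁻¹ * d := by group
    rw [cs.length_inv d, ← cs.length_inv (d⁻¹ * b), h1]
    exact hmin _ (Subgroup.inv_mem _ hb)
  have := cs.length_mul_add_of_min_right hmin' a⁻¹ (Subgroup.inv_mem _ ha)
  have h2 : (a * d)⁻¹ = d⁻¹ * a⁻¹ := by group
  rw [← cs.length_inv (a * d), h2, this, cs.length_inv, cs.length_inv]
  omega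

theorem kilmoyer_mem {T T' : Set B} {d : W}
    (hmin : ∀ a ∈ Subgroup.closure (cs.simple '' T), ∀ b ∈ Subgroup.closure (cs.simple '' T'),
      ℓ d ≤ ℓ (a * d * b)) :
    ∀ x, x ∈ Subgroup.closure (cs.simple '' T) →
      d⁻¹ * x * d ∈ Subgroup.closure (cs.simple '' T') →
      x ∈ Subgroup.closure
        (cs.simple '' {i | i ∈ T ∧ ∃ j ∈ T', d * cs.simple j * d⁻¹ = cs.simple i}) := by
  have hminR : ∀ b ∈ Subgroup.closure (cs.simple '' T'), ℓ d ≤ ℓ (d * b) := by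
    intro b hb
    have := hmin 1 (Subgroup.one_mem _) b hb
    simpa using this
  have hminL : ∀ a ∈ Subgroup.closure (cs.simple '' T), ℓ d ≤ ℓ (a * d) := by
    intro a ha
    have := hmin a ha 1 (Subgroup.one_mem _)
    simpa using this
  suffices h : ∀ n : ℕ, ∀ x, ℓ x = n → x ∈ Subgroup.closure (cs.simple '' T) →
      d⁻¹ * x * d ∈ Subgroup.closure (cs.simple '' T') →
      x ∈ Subgroup.closure
        (cs.simple '' {i | i ∈ T ∧ ∃ j ∈ T', d * cs.simple j * d⁻¹ = cs.simple i}) by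
    intro x hxT hxd
    exact h (ℓ x) x rfl hxT hxd
  intro n
  induction n using Nat.strong_induction_on with
  | _ n ihn =>
    intro x hlx hxT hxd
    rcases eq_or_ne x 1 with rfl | hx1
    · exact Subgroup.one_mem _
    obtain ⟨i, hiT, hdesc, hx'T⟩ := cs.exists_left_descent_subset hxT hx1
    set y := d⁻¹ * x * d with hydef
    have hyT' : y ∈ Subgroup.closure (cs.simple '' T') := hxd
    have hxd_eq : x * d = d * y := by rw [hydef]; group
    have h1 : ℓ (x * d) = ℓ x + ℓ d := cs.length_mul_add_of_min_left hminL x hxT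
    have h2 : ℓ (d * y) = ℓ d + ℓ y := cs.length_mul_add_of_min_right hminR y hyT'
    have hly : ℓ y = ℓ x := by rw [hxd_eq] at h1; omega
    have h3 : ℓ (s i * x * d) = ℓ (s i * x) + ℓ d :=
      cs.length_mul_add_of_min_left hminL _ hx'T
    have h4 : s i * x * d = s i * (d * y) := by rw [← hxd_eq]; group
    have h5 : ℓ (s i * (d * y)) < ℓ (d * y) := by
      rw [← h4, h3, h2]
      omega
    obtain ⟨δ, hδred, hδeq⟩ := cs.exists_reduced_word' d
    obtain ⟨η, hηred, hηsub, hyeq⟩ := cs.exists_reduced_word_subset hyT'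
    have hδlen : δ.length = ℓ d := by rw [hδeq]; exact hδred.symm
    have hηlen : η.length = ℓ y := by rw [hyeq]; exact hηred.symm
    have hΩprod : π (η.reverse ++ δ.reverse) = (d * y)⁻¹ := by
      rw [wordProd_append, wordProd_reverse, wordProd_reverse, ← hδeq, ← hyeq]
      group
    have hΩred : cs.IsReduced (η.reverse ++ δ.reverse) := by
      unfold IsReduced
      rw [hΩprod, cs.length_inv, h2, List.length_append, List.length_reverse,
        List.length_reverse]
      omega
    have hlt : ℓ (π (η.reverse ++ δ.reverse) * s i) < ℓ (π (η.reverse ++ δ.reverse)) := by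
      have he2 : (s i * (d * y))⁻¹ = (d * y)⁻¹ * s i := by
        rw [mul_inv_rev, cs.inv_simple]
      have he : π (η.reverse ++ δ.reverse) * s i = (s i * (d * y))⁻¹ := by
        rw [hΩprod, he2]
      rw [he, cs.length_inv, hΩprod, cs.length_inv]
      exact h5
    obtain ⟨k, hk, hkeq⟩ := cs.strong_exchange_right hΩred (cs.isReflection_simple i) hlt
    rcases lt_or_ge k η.reverse.length with hkη | hkη
    · -- exchange happens in the η part : s i is d-conjugate of an element of the T' parabolic
      rw [List.eraseIdx_append_of_lt_length hkη] at hkeq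
      rw [hΩprod, wordProd_append, wordProd_reverse, ← hδeq] at hkeq
      -- hkeq : (d * y)⁻¹ * s i = π (η.reverse.eraseIdx k) * d⁻¹
      have ht' : d⁻¹ * s i * d = y * π (η.reverse.eraseIdx k) := by
        calc d⁻¹ * s i * d = y * ((d * y)⁻¹ * s i) * d := by group
          _ = y * (π (η.reverse.eraseIdx k) * d⁻¹) * d := by rw [hkeq]
          _ = y * π (η.reverse.eraseIdx k) := by group
      have hηkmem : π (η.reverse.eraseIdx k) ∈ Subgroup.closure (cs.simple '' T') := by
        apply (cs.mem_closure_simple_iff).mpr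
        refine ⟨η.reverse.eraseIdx k, ?_, rfl⟩
        intro x hx
        exact hηsub x (List.mem_reverse.mp ((List.eraseIdx_sublist _ _).subset hx))
      have ht'mem : d⁻¹ * s i * d ∈ Subgroup.closure (cs.simple '' T') := by
        rw [ht']
        exact Subgroup.mul_mem _ hyT' hηkmem
      have hsimem : s i ∈ Subgroup.closure (cs.simple '' T) :=
        Subgroup.subset_closure ⟨i, hiT, rfl⟩
      have hlsid : ℓ (s i * d) = ℓ (s i) + ℓ d :=
        cs.length_mul_add_of_min_left hminL _ hsimem
      have hdt' : d * (d⁻¹ * s i * d) = s i * d := by group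
      have h6 : ℓ (d * (d⁻¹ * s i * d)) = ℓ d + ℓ (d⁻¹ * s i * d) :=
        cs.length_mul_add_of_min_right hminR _ ht'mem
      have hlt' : ℓ (d⁻¹ * s i * d) = 1 := by
        rw [hdt'] at h6
        rw [cs.length_simple] at hlsid
        omega
      obtain ⟨ζ, hζred, hζsub, hζeq⟩ := cs.exists_reduced_word_subset ht'mem
      have hζlen : ζ.length = 1 := by
        have := hζred
        unfold IsReduced at this
        rw [← hζeq, hlt'] at this
        omega
      obtain ⟨j, rfl⟩ : ∃ j, ζ = [j] := by
        match ζ, hζlen with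
        | [j], _ => exact ⟨j, rfl⟩
      have hjT' : j ∈ T' := hζsub j (List.mem_singleton_self j)
      have hsj : d⁻¹ * s i * d = s j := by
        rw [hζeq]
        simp
      have hiJ : i ∈ {i | i ∈ T ∧ ∃ j ∈ T', d * cs.simple j * d⁻¹ = cs.simple i} := by
        refine ⟨hiT, j, hjT', ?_⟩
        rw [← hsj]
        group
      have hx'd : d⁻¹ * (s i * x) * d ∈ Subgroup.closure (cs.simple '' T') := by
        have hsplit : d⁻¹ * (s i * x) * d = (d⁻¹ * s i * d) * (d⁻¹ * x * d) := by group
        rw [hsplit]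
        exact Subgroup.mul_mem _ ht'mem hxd
      have ihx' := ihn (ℓ (s i * x)) (by omega) (s i * x) rfl hx'T hx'd
      have hxsplit : x = s i * (s i * x) := by
        rw [← mul_assoc, cs.simple_mul_simple_self, one_mul]
      rw [hxsplit]
      exact Subgroup.mul_mem _ (Subgroup.subset_closure ⟨i, hiJ, rfl⟩) ihx'
    · -- exchange in the δ part : contradicts minimality of d
      exfalso
      rw [List.eraseIdx_append_of_length_le hkη] at hkeq
      rw [hΩprod, wordProd_append, wordProd_reverse, ← hyeq] at hkeq
      -- hkeq : (d * y)⁻¹ * s i = y⁻¹ * π (δ.reverse.eraseIdx (k - η.reverse.length))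
      have hd' : d⁻¹ * s i = π (δ.reverse.eraseIdx (k - η.reverse.length)) := by
        have hy2 : y⁻¹ * (d⁻¹ * s i) = y⁻¹ * π (δ.reverse.eraseIdx (k - η.reverse.length)) := by
          rw [← hkeq]; group
        exact mul_left_cancel hy2
      have hklen : k - η.reverse.length < δ.reverse.length := by
        rw [List.length_append] at hk
        omega
      have hlen1 := List.length_eraseIdx_add_one hklen
      have hle : ℓ (d⁻¹ * s i) ≤ δ.reverse.length - 1 := by
        rw [hd']
        have := cs.length_wordProd_le (δ.reverse.eraseIdx (k - η.reverse.length))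
        omega
      have hsimem : s i ∈ Subgroup.closure (cs.simple '' T) :=
        Subgroup.subset_closure ⟨i, hiT, rfl⟩
      have hlsid : ℓ (s i * d) = ℓ (s i) + ℓ d :=
        cs.length_mul_add_of_min_left hminL _ hsimem
      have hinv : ℓ (d⁻¹ * s i) = ℓ (s i * d) := by
        have he : d⁻¹ * s i = (s i * d)⁻¹ := by
          rw [show (s i * d)⁻¹ = d⁻¹ * (s i)⁻¹ from mul_inv_rev _ _, cs.inv_simple]
        rw [he, cs.length_inv]
      rw [cs.length_simple] at hlsid
      rw [List.length_reverse] at hle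
      omega

private theorem conj_map_map {G : Type*} [Group G] (x y : G) (H : Subgroup G) :
    Subgroup.map (MulAut.conj (x * y)).toMonoidHom H =
      Subgroup.map (MulAut.conj x).toMonoidHom (Subgroup.map (MulAut.conj y).toMonoidHom H) := by
  rw [Subgroup.map_map]
  congr 1
  ext z
  simp [MulAut.conj_apply, mul_assoc]

private theorem conj_map_self {G : Type*} [Group G] {H : Subgroup G} {b : G} (hb : b ∈ H) :
    Subgroup.map (MulAut.conj b).toMonoidHom H = H := by
  ext x
  simp only [Subgroup.mem_map, MulEquiv.coe_toMonoidHom, MulAut.conj_apply]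
  constructor
  · rintro ⟨z, hz, rfl⟩
    exact Subgroup.mul_mem _ (Subgroup.mul_mem _ hb hz) (Subgroup.inv_mem _ hb)
  · intro hx
    refine ⟨b⁻¹ * x * b, ?_, by group⟩
    exact Subgroup.mul_mem _ (Subgroup.mul_mem _ (Subgroup.inv_mem _ hb) hx) hb

private theorem conj_map_inv_map {G : Type*} [Group G] (x : G) (H : Subgroup G) :
    Subgroup.map (MulAut.conj x).toMonoidHom
      (Subgroup.map (MulAut.conj x⁻¹).toMonoidHom H) = H := by
  rw [← conj_map_map, mul_inv_cancel]
  have h1 : (MulAut.conj (1 : G)).toMonoidHom = MonoidHom.id G := by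
    ext z
    simp
  rw [h1, Subgroup.map_id]

theorem inf_conj_parabolic (T T' : Set B) (w : W) :
    ∃ (v : W) (U : Set B),
      Subgroup.closure (cs.simple '' T) ⊓
        Subgroup.map (MulAut.conj w).toMonoidHom (Subgroup.closure (cs.simple '' T'))
      = Subgroup.map (MulAut.conj v).toMonoidHom (Subgroup.closure (cs.simple '' U)) := by
  classical
  set PT := Subgroup.closure (cs.simple '' T) with hPT
  set PT' := Subgroup.closure (cs.simple '' T') with hPT'
  set S : Set ℕ := {n | ∃ a ∈ PT, ∃ b ∈ PT', ℓ (a * w * b) = n} with hS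
  have hSne : S.Nonempty := ⟨ℓ w, 1, Subgroup.one_mem _, 1, Subgroup.one_mem _, by simp⟩
  obtain ⟨a, ha, b, hb, hd⟩ := Nat.sInf_mem hSne
  have hmin : ∀ a₁ ∈ PT, ∀ b₁ ∈ PT', ℓ (a * w * b) ≤ ℓ (a₁ * (a * w * b) * b₁) := by
    intro a₁ ha₁ b₁ hb₁
    rw [hd]
    apply Nat.sInf_le
    refine ⟨a₁ * a, Subgroup.mul_mem _ ha₁ ha, b * b₁, Subgroup.mul_mem _ hb hb₁, ?_⟩
    congr 1
    group
  set d := a * w * b with hddef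
  have heq : PT ⊓ Subgroup.map (MulAut.conj d).toMonoidHom PT' =
      Subgroup.closure
        (cs.simple '' {i | i ∈ T ∧ ∃ j ∈ T', d * cs.simple j * d⁻¹ = cs.simple i}) := by
    apply _root_.le_antisymm
    · rintro x ⟨hx1, hx2⟩
      obtain ⟨z, hz, hzx⟩ := hx2
      have hzx' : d⁻¹ * x * d ∈ PT' := by
        have hxz : d⁻¹ * x * d = z := by
          rw [← hzx]
          simp only [MulEquiv.coe_toMonoidHom, MulAut.conj_apply]
          group
        rw [hxz]
        exact hz
      exact cs.kilmoyer_mem hmin x hx1 hzx'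
    · apply (Subgroup.closure_le _).mpr
      rintro _ ⟨i, hiJ, rfl⟩
      obtain ⟨hiT, j, hjT', hji⟩ := hiJ
      refine ⟨Subgroup.subset_closure ⟨i, hiT, rfl⟩, ?_⟩
      refine ⟨cs.simple j, Subgroup.subset_closure ⟨j, hjT', rfl⟩, ?_⟩
      simpa [MulAut.conj_apply] using hji
  refine ⟨a⁻¹, {i | i ∈ T ∧ ∃ j ∈ T', d * cs.simple j * d⁻¹ = cs.simple i}, ?_⟩
  rw [← heq]
  have hdecomp : Subgroup.map (MulAut.conj d).toMonoidHom PT' =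
      Subgroup.map (MulAut.conj a).toMonoidHom
        (Subgroup.map (MulAut.conj w).toMonoidHom PT') := by
    rw [hddef, conj_map_map, conj_map_map, conj_map_self hb]
  have hinj : Function.Injective ⇑(MulAut.conj a⁻¹).toMonoidHom := (MulAut.conj a⁻¹).injective
  rw [Subgroup.map_inf _ _ _ hinj]
  congr 1
  · -- PT = map (conj a⁻¹) PT
    exact (conj_map_self (Subgroup.inv_mem _ ha)).symm
  · rw [hdecomp, ← conj_map_map, inv_mul_cancel]
    have h1 : (MulAut.conj (1 : W)).toMonoidHom = MonoidHom.id W := by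
      ext z
      simp
    rw [h1, Subgroup.map_id]

end
end CoxeterSystem

/-- A parabolic subgroup of a Coxeter system `(W, S)` is a conjugate of a subgroup generated by
a subset of the simple reflections. -/
def IsParabolicSubgroup {B W : Type*} [Group W] {M : CoxeterMatrix B}
    (cs : CoxeterSystem M W) (H : Subgroup W) : Prop :=
  ∃ (w : W) (T : Set B),
    H = Subgroup.map (MulAut.conj w).toMonoidHom (Subgroup.closure (cs.simple '' T))

/-- The intersection of two parabolic subgroups of a Coxeter group is parabolic. -/
theorem isParabolicSubgroup_inf {B W : Type*} [Group W] {M : CoxeterMatrix B}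
    (cs : CoxeterSystem M W) (Γ₁ Γ₂ : Subgroup W)
    (h₁ : IsParabolicSubgroup cs Γ₁) (h₂ : IsParabolicSubgroup cs Γ₂) :
    IsParabolicSubgroup cs (Γ₁ ⊓ Γ₂) := by
  obtain ⟨w₁, T₁, rfl⟩ := h₁
  obtain ⟨w₂, T₂, rfl⟩ := h₂
  obtain ⟨v, U, hvU⟩ := cs.inf_conj_parabolic T₁ T₂ (w₁⁻¹ * w₂)
  refine ⟨w₁ * v, U, ?_⟩
  have h1 : Subgroup.map (MulAut.conj w₂).toMonoidHom (Subgroup.closure (cs.simple '' T₂))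
      = Subgroup.map (MulAut.conj w₁).toMonoidHom
          (Subgroup.map (MulAut.conj (w₁⁻¹ * w₂)).toMonoidHom
            (Subgroup.closure (cs.simple '' T₂))) := by
    rw [← CoxeterSystem.conj_map_map, mul_inv_cancel_left]
  rw [h1, ← Subgroup.map_inf _ _ _ (MulAut.conj w₁).injective, hvU,
    ← CoxeterSystem.conj_map_map]
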